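/- arXiv:2601.15403 — 2 statements merged into one kernel-verified Lean document; each statement's English description precedes it below -/
import Mathlib

section
/- Let k be a field of characteristic 2 and let A, B be disjoint subsets of {1,…,n}. Set P = P(A,B) and let Q be any ideal of R generated by polynomials involving only the variables {x_i, y_i : i ∈ B} (i.e., Q is the extension to R of an ideal of the subring k[x_i, y_i : i ∈ B]). Then (P^{[2]} + Q) ∩ (P^{[2]} + (ω_A)) = P^{[2]} + Q·(ω_A). -/
open MvPolynomial

noncomputable section

namespace BEI

/-- The polynomial ring `k[x_1,…,x_n,y_1,…,y_n]`: variables `Sum.inl i` are the `x_i`,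
variables `Sum.inr i` are the `y_i`. -/
abbrev Ring' (k : Type*) [CommRing k] (n : ℕ) : Type _ := MvPolynomial (Fin n ⊕ Fin n) k

variable {k : Type*} [CommRing k] {n : ℕ}

/-- The variable `x_i`. -/
def xv (i : Fin n) : Ring' k n := X (Sum.inl i)

/-- The variable `y_i`. -/
def yv (i : Fin n) : Ring' k n := X (Sum.inr i)

/-- The binomial `f_{i,j} = x_i y_j - x_j y_i`. -/
def fb (i j : Fin n) : Ring' k n := xv i * yv j - xv j * yv i

/-- The Frobenius power `I^{[p]}`, the ideal generated by the `p`-th powers of all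
elements of `I`. -/
def frobPow {A : Type*} [CommSemiring A] (I : Ideal A) (p : ℕ) : Ideal A :=
  Ideal.span ((· ^ p) '' (I : Set A))

/-- The ideal `P(A,B)`, generated by `{x_i, y_i : i ∈ A}` together with all `f_{a,b}` for
distinct `a, b ∈ B`. -/
def PAB (A B : Finset (Fin n)) : Ideal (Ring' k n) :=
  Ideal.span
    ({g | ∃ i ∈ A, g = xv i ∨ g = yv i} ∪
      {g | ∃ a ∈ B, ∃ b ∈ B, a ≠ b ∧ g = fb a b})

/-- The monomial `ω_A = ∏_{i ∈ A} x_i y_i`. -/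
def omegaA (A : Finset (Fin n)) : Ring' k n := ∏ i ∈ A, (xv i * yv i)

/-! ### Auxiliary machinery -/

open Classical

/-- Select the terms of a polynomial whose exponents satisfy `P`. -/
def sel (P : ((Fin n ⊕ Fin n) →₀ ℕ) → Prop) (p : Ring' k n) : Ring' k n :=
  ∑ d ∈ p.support, if P d then monomial d (coeff d p) else 0

lemma coeff_sel (P : ((Fin n ⊕ Fin n) →₀ ℕ) → Prop) (p : Ring' k n)
    (e : (Fin n ⊕ Fin n) →₀ ℕ) :
    coeff e (sel P p) = if P e then coeff e p else 0 := by
  classical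
  unfold sel
  rw [coeff_sum]
  rw [Finset.sum_eq_single e]
  · split_ifs with h
    · rw [coeff_monomial, if_pos rfl]
    · rw [coeff_zero]
  · intro d _ hde
    split_ifs with h
    · rw [coeff_monomial, if_neg hde]
    · rw [coeff_zero]
  · intro he
    have h0 : coeff e p = 0 := notMem_support_iff.mp he
    split_ifs with h
    · rw [h0, coeff_monomial]; split_ifs <;> rfl
    · rw [coeff_zero]

def selHom (P : ((Fin n ⊕ Fin n) →₀ ℕ) → Prop) : Ring' k n →+ Ring' k n where
  toFun := sel P
  map_zero' := by
    apply MvPolynomial.ext; intro e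
    rw [coeff_sel, coeff_zero]
    split_ifs <;> rfl
  map_add' p q := by
    apply MvPolynomial.ext; intro e
    rw [coeff_add, coeff_sel, coeff_sel, coeff_sel, coeff_add]
    split_ifs <;> simp

/-- Exponent conditions. -/
def wcond (A : Finset (Fin n)) (d : (Fin n ⊕ Fin n) →₀ ℕ) : Prop :=
  ∀ i ∈ A, d (Sum.inl i) = 1 ∧ d (Sum.inr i) = 1

def efree (A : Finset (Fin n)) (d : (Fin n ⊕ Fin n) →₀ ℕ) : Prop :=
  ∀ i ∈ A, d (Sum.inl i) = 0 ∧ d (Sum.inr i) = 0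

def Wexp (A : Finset (Fin n)) : (Fin n ⊕ Fin n) →₀ ℕ :=
  ∑ i ∈ A, (Finsupp.single (Sum.inl i) 1 + Finsupp.single (Sum.inr i) 1)

lemma Wexp_apply_inl (A : Finset (Fin n)) (j : Fin n) :
    Wexp A (Sum.inl j) = if j ∈ A then 1 else 0 := by
  classical
  unfold Wexp
  rw [Finsupp.finset_sum_apply]
  simp [Finsupp.single_apply, Finset.sum_ite_eq']

lemma Wexp_apply_inr (A : Finset (Fin n)) (j : Fin n) :
    Wexp A (Sum.inr j) = if j ∈ A then 1 else 0 := by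
  classical
  unfold Wexp
  rw [Finsupp.finset_sum_apply]
  simp [Finsupp.single_apply, Finset.sum_ite_eq']

lemma omega_eq (A : Finset (Fin n)) : omegaA (k := k) A = monomial (Wexp A) 1 := by
  classical
  unfold omegaA Wexp
  induction A using Finset.induction_on with
  | empty => simp
  | @insert a s h ih =>
    rw [Finset.prod_insert h, Finset.sum_insert h, ih]
    simp [xv, yv, X, monomial_mul]

lemma Wexp_le {A : Finset (Fin n)} {d : (Fin n ⊕ Fin n) →₀ ℕ} (h : wcond A d) :
    Wexp A ≤ d := by
  rw [Finsupp.le_def]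
  intro w
  cases w with
  | inl j =>
    rw [Wexp_apply_inl]
    split_ifs with hj
    · exact le_of_eq ((h j hj).1).symm
    · exact Nat.zero_le _
  | inr j =>
    rw [Wexp_apply_inr]
    split_ifs with hj
    · exact le_of_eq ((h j hj).2).symm
    · exact Nat.zero_le _

lemma wcond_Wexp (A : Finset (Fin n)) : wcond A (Wexp A) := by
  intro i hi
  simp [Wexp_apply_inl, Wexp_apply_inr, hi]

lemma sel_omega (A : Finset (Fin n)) :
    sel (wcond A) (omegaA (k := k) A) = omegaA (k := k) A := by
  apply MvPolynomial.ext; intro e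
  rw [coeff_sel]
  split_ifs with h
  · rfl
  · rw [omega_eq, coeff_monomial]
    split_ifs with h2
    · exact absurd (h2 ▸ wcond_Wexp A) h
    · rfl

lemma sel_wcond_dvd (A : Finset (Fin n)) (p : Ring' k n) :
    ∃ s, sel (wcond A) p = omegaA (k := k) A * s := by
  classical
  refine ⟨∑ d ∈ p.support, if wcond A d then monomial (d - Wexp A) (coeff d p) else 0, ?_⟩
  rw [omega_eq, Finset.mul_sum]
  unfold sel
  refine Finset.sum_congr rfl fun d _ => ?_
  split_ifs with h
  · rw [monomial_mul, one_mul, add_tsub_cancel_of_le (Wexp_le h)]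
  · rw [mul_zero]

lemma sel_mul_free {A : Finset (Fin n)} {g : Ring' k n}
    (hg : ∀ d ∈ g.support, efree A d) (r : Ring' k n) :
    sel (wcond A) (r * g) = g * sel (wcond A) r := by
  classical
  apply MvPolynomial.ext; intro e
  rw [coeff_sel]
  split_ifs with he
  · rw [mul_comm r g, coeff_mul, coeff_mul]
    refine Finset.sum_congr rfl fun x hx => ?_
    rw [Finset.HasAntidiagonal.mem_antidiagonal] at hx
    by_cases h0 : coeff x.1 g = 0
    · rw [h0, zero_mul, zero_mul]
    · have hx1 : efree A x.1 := hg x.1 (mem_support_iff.mpr h0)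
      have hc2 : wcond A x.2 := by
        intro i hi
        have h1 := congrArg (fun f => f (Sum.inl i)) hx
        have h2 := congrArg (fun f => f (Sum.inr i)) hx
        simp only [Finsupp.add_apply] at h1 h2
        rw [(hx1 i hi).1, zero_add] at h1
        rw [(hx1 i hi).2, zero_add] at h2
        exact ⟨h1.trans (he i hi).1, h2.trans (he i hi).2⟩
      rw [coeff_sel, if_pos hc2]
  · symm
    rw [coeff_mul]
    apply Finset.sum_eq_zero
    intro x hx
    rw [Finset.HasAntidiagonal.mem_antidiagonal] at hx
    by_cases h0 : coeff x.1 g = 0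
    · rw [h0, zero_mul]
    · have hx1 : efree A x.1 := hg x.1 (mem_support_iff.mpr h0)
      rw [coeff_sel, if_neg, mul_zero]
      intro hc2
      apply he
      intro i hi
      have h1 := congrArg (fun f => f (Sum.inl i)) hx
      have h2 := congrArg (fun f => f (Sum.inr i)) hx
      simp only [Finsupp.add_apply] at h1 h2
      rw [(hx1 i hi).1, zero_add] at h1
      rw [(hx1 i hi).2, zero_add] at h2
      exact ⟨h1 ▸ (hc2 i hi).1, h2 ▸ (hc2 i hi).2⟩

lemma sel_mul_sq {A : Finset (Fin n)} {v : Fin n ⊕ Fin n}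
    (hv : ∀ d, wcond A d → d v = 1) (r : Ring' k n) :
    sel (wcond A) (r * X v ^ 2) = 0 := by
  classical
  apply MvPolynomial.ext; intro e
  rw [coeff_sel, coeff_zero]
  split_ifs with h
  · have h1 : e v = 1 := hv e h
    rw [pow_two, ← mul_assoc, coeff_mul_X', if_pos, coeff_mul_X', if_neg]
    · intro hmem
      rw [Finsupp.mem_support_iff, Finsupp.tsub_apply, Finsupp.single_apply,
        if_pos rfl, h1] at hmem
      exact hmem rfl
    · rw [Finsupp.mem_support_iff, h1]
      exact one_ne_zero
  · rfl

/-! ### Ideal membership lemmas -/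

lemma xv_sq_mem (A B : Finset (Fin n)) {i : Fin n} (hi : i ∈ A) :
    (xv i : Ring' k n) ^ 2 ∈ frobPow (PAB (k := k) A B) 2 :=
  Ideal.subset_span ⟨xv i, Ideal.subset_span (Or.inl ⟨i, hi, Or.inl rfl⟩), rfl⟩

lemma yv_sq_mem (A B : Finset (Fin n)) {i : Fin n} (hi : i ∈ A) :
    (yv i : Ring' k n) ^ 2 ∈ frobPow (PAB (k := k) A B) 2 :=
  Ideal.subset_span ⟨yv i, Ideal.subset_span (Or.inl ⟨i, hi, Or.inr rfl⟩), rfl⟩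

lemma fb_sq_mem (A B : Finset (Fin n)) {a b : Fin n} (ha : a ∈ B) (hb : b ∈ B)
    (hab : a ≠ b) :
    (fb a b : Ring' k n) ^ 2 ∈ frobPow (PAB (k := k) A B) 2 :=
  Ideal.subset_span ⟨fb a b, Ideal.subset_span (Or.inr ⟨a, ha, b, hb, hab, rfl⟩), rfl⟩

lemma monomial_mem_of_sq (A B : Finset (Fin n)) {v : Fin n ⊕ Fin n}
    (hvF : (X v : Ring' k n) ^ 2 ∈ frobPow (PAB (k := k) A B) 2)
    {d : (Fin n ⊕ Fin n) →₀ ℕ} (hd : 2 ≤ d v) (a : k) :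
    (monomial d a : Ring' k n) ∈ frobPow (PAB (k := k) A B) 2 := by
  have hle : Finsupp.single v 2 ≤ d := by
    rw [Finsupp.le_def]
    intro w
    rw [Finsupp.single_apply]
    split_ifs with hw
    · exact hw ▸ hd
    · exact Nat.zero_le _
  have heq : (monomial d a : Ring' k n) =
      monomial (d - Finsupp.single v 2) a * X v ^ 2 := by
    rw [X_pow_eq_monomial, monomial_mul, mul_one,
      tsub_add_cancel_of_le hle]
  rw [heq]
  exact Ideal.mul_mem_left _ _ hvF

lemma omega_mul_monomial_mem (A B : Finset (Fin n))
    {d : (Fin n ⊕ Fin n) →₀ ℕ} (hd : ¬ efree A d) (a : k) :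
    omegaA (k := k) A * monomial d a ∈ frobPow (PAB (k := k) A B) 2 := by
  unfold efree at hd
  push_neg at hd
  obtain ⟨i, hi, hcon⟩ := hd
  rw [omega_eq, monomial_mul, one_mul]
  by_cases h1 : d (Sum.inl i) = 0
  · have h2 := hcon h1
    refine monomial_mem_of_sq A B (v := Sum.inr i) ?_ ?_ a
    · exact yv_sq_mem A B hi
    · rw [Finsupp.add_apply, Wexp_apply_inr, if_pos hi]
      omega
  · refine monomial_mem_of_sq A B (v := Sum.inl i) ?_ ?_ a
    · exact xv_sq_mem A B hi
    · rw [Finsupp.add_apply, Wexp_apply_inl, if_pos hi]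
      omega

/-- The generating set of `F ⊔ span S`. -/
def Tset (A B : Finset (Fin n)) (S : Set (Ring' k n)) : Set (Ring' k n) :=
  ((· ^ 2) '' ({g | ∃ i ∈ A, g = xv i ∨ g = yv i} ∪
      {g | ∃ a ∈ B, ∃ b ∈ B, a ≠ b ∧ g = fb a b})) ∪ S

lemma F_le_spanT [CharP k 2] (A B : Finset (Fin n)) (S : Set (Ring' k n)) :
    frobPow (PAB (k := k) A B) 2 ≤ Ideal.span (Tset A B S) := by
  unfold frobPow
  rw [Ideal.span_le]
  rintro _ ⟨p, hp, rfl⟩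
  show (p : Ring' k n) ^ 2 ∈ Ideal.span (Tset A B S)
  refine Submodule.span_induction
    (p := fun q _ => (q : Ring' k n) ^ 2 ∈ Ideal.span (Tset A B S))
    ?_ ?_ ?_ ?_ hp
  · intro x hx
    exact Ideal.subset_span (Or.inl ⟨x, hx, rfl⟩)
  · show (0 : Ring' k n) ^ 2 ∈ Ideal.span (Tset A B S)
    rw [zero_pow two_ne_zero]
    exact Ideal.zero_mem _
  · intro x y _ _ hx2 hy2
    rw [CharTwo.add_sq]
    exact Ideal.add_mem _ hx2 hy2
  · intro r x _ hx2
    rw [smul_eq_mul, mul_pow]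
    exact Ideal.mul_mem_left _ _ hx2

lemma free_of_vars {A B : Finset (Fin n)} (hdisj : Disjoint A B) {g : Ring' k n}
    (hg : ∀ w ∈ g.vars, ∃ i ∈ B, w = Sum.inl i ∨ w = Sum.inr i) :
    ∀ d ∈ g.support, efree A d := by
  intro d hd i hi
  have hkey : ∀ w : Fin n ⊕ Fin n, d w ≠ 0 →
      (w = Sum.inl i ∨ w = Sum.inr i) → False := by
    intro w hw hwi
    have hv : w ∈ g.vars := (mem_vars w).mpr ⟨d, hd, Finsupp.mem_support_iff.mpr hw⟩
    obtain ⟨j, hj, hor⟩ := hg w hv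
    have : i = j := by
      rcases hwi with rfl | rfl <;> rcases hor with h | h <;>
        first
          | exact Sum.inl.inj h
          | exact Sum.inr.inj h
          | exact absurd h (by simp)
    exact Finset.disjoint_left.mp hdisj hi (this ▸ hj)
  constructor
  · by_contra h0
    exact hkey _ h0 (Or.inl rfl)
  · by_contra h0
    exact hkey _ h0 (Or.inr rfl)

lemma fb_sq_vars [Nontrivial k] {B : Finset (Fin n)} {a b : Fin n}
    (ha : a ∈ B) (hb : b ∈ B) :
    ∀ w ∈ ((fb (k := k) a b ^ 2).vars), ∃ i ∈ B, w = Sum.inl i ∨ w = Sum.inr i := by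
  classical
  intro w hw
  have hw1 : w ∈ (fb (k := k) a b).vars := vars_pow _ 2 hw
  unfold fb xv yv at hw1
  have h2 := vars_sub_subset (p := X (Sum.inl a) * X (Sum.inr b))
    (q := X (Sum.inl b) * X (Sum.inr a)) hw1
  rw [Finset.mem_union] at h2
  rcases h2 with h2 | h2
  · have h3 := vars_mul _ _ h2
    rw [Finset.mem_union, vars_X, vars_X, Finset.mem_singleton, Finset.mem_singleton] at h3
    rcases h3 with rfl | rfl
    · exact ⟨a, ha, Or.inl rfl⟩
    · exact ⟨b, hb, Or.inr rfl⟩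
  · have h3 := vars_mul _ _ h2
    rw [Finset.mem_union, vars_X, vars_X, Finset.mem_singleton, Finset.mem_singleton] at h3
    rcases h3 with rfl | rfl
    · exact ⟨b, hb, Or.inl rfl⟩
    · exact ⟨a, ha, Or.inr rfl⟩

lemma key_lemma (k : Type*) [Field k] [CharP k 2] (n : ℕ)
    (A B : Finset (Fin n)) (hdisj : Disjoint A B)
    (S : Set (Ring' k n))
    (hSvars : ∀ g ∈ S, ∀ w ∈ g.vars, ∃ i ∈ B, w = Sum.inl i ∨ w = Sum.inr i)
    (c : Ring' k n)
    (h : c * omegaA (k := k) A ∈ frobPow (PAB (k := k) A B) 2 ⊔ Ideal.span S) :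
    c * omegaA (k := k) A ∈ frobPow (PAB (k := k) A B) 2 ⊔
      Ideal.span S * Ideal.span {omegaA (k := k) A} := by
  classical
  set F := frobPow (PAB (k := k) A B) 2 with hFdef
  set ω := omegaA (k := k) A with hωdef
  set c₀ := sel (efree A) c with hc₀def
  -- the non-free part lands in F
  have hrw : c - c₀ = sel (fun d => ¬ efree A d) c := by
    apply MvPolynomial.ext; intro e
    rw [coeff_sub, coeff_sel, coeff_sel]
    split_ifs with h1 h2 <;> simp_all
  have hc1F : (c - c₀) * ω ∈ F := by
    rw [hrw]
    unfold sel
    rw [Finset.sum_mul]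
    apply Ideal.sum_mem
    intro d _
    split_ifs with h1
    · rw [mul_comm]
      exact omega_mul_monomial_mem A B h1 _
    · rw [zero_mul]
      exact Ideal.zero_mem _
  -- c₀ * ω lies in the span of the explicit generators
  have hsupT : F ⊔ Ideal.span S ≤ Ideal.span (Tset A B S) := by
    apply sup_le (F_le_spanT A B S)
    apply Ideal.span_mono
    exact Set.subset_union_right
  have hc0T : c₀ * ω ∈ Ideal.span (Tset A B S) := by
    have h1 : c₀ * ω = c * ω - (c - c₀) * ω := by ring
    rw [h1]
    exact Ideal.sub_mem _ (hsupT h) (hsupT (Submodule.mem_sup_left hc1F))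
  obtain ⟨m, f, g, hsum⟩ := Submodule.mem_span_set'.mp hc0T
  have hc₀free : ∀ d ∈ c₀.support, efree A d := by
    intro d hd
    by_contra h0
    have : coeff d c₀ = 0 := by rw [hc₀def, coeff_sel, if_neg h0]
    exact (mem_support_iff.mp hd) this
  -- apply the selection map
  have hπ : c₀ * ω = ∑ i : Fin m, sel (wcond A) (f i * (g i : Ring' k n)) := by
    have h1 : sel (wcond A) (c₀ * ω) = c₀ * ω := by
      rw [mul_comm c₀ ω, sel_mul_free hc₀free ω, sel_omega, mul_comm]
    calc c₀ * ω = sel (wcond A) (c₀ * ω) := h1.symm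
      _ = selHom (wcond A) (∑ i : Fin m, f i • (g i : Ring' k n)) := by rw [hsum]; rfl
      _ = ∑ i : Fin m, sel (wcond A) (f i * (g i : Ring' k n)) := by
          rw [map_sum]
          exact Finset.sum_congr rfl fun i _ => by rw [smul_eq_mul]; rfl
  have h2 : c₀ * ω ∈ F ⊔ Ideal.span S * Ideal.span {ω} := by
    rw [hπ]
    apply Ideal.sum_mem
    intro i _
    rcases (g i).2 with hg | hg
    · obtain ⟨t, ht, hsq⟩ := hg
      rcases ht with ⟨j, hj, hxy⟩ | ⟨a, ha, b, hb, hab, hfb⟩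
      · have hz : sel (wcond A) (f i * (g i : Ring' k n)) = 0 := by
          rcases hxy with rfl | rfl
          · rw [← hsq]
            exact sel_mul_sq (v := Sum.inl j) (fun d hd => (hd j hj).1) _
          · rw [← hsq]
            exact sel_mul_sq (v := Sum.inr j) (fun d hd => (hd j hj).2) _
        rw [hz]
        exact Ideal.zero_mem _
      · have hfree : ∀ d ∈ ((fb (k := k) a b ^ 2)).support, efree A d :=
          free_of_vars hdisj (fb_sq_vars ha hb)
        obtain ⟨s, hs⟩ := sel_wcond_dvd A (f i)
        have heq : sel (wcond A) (f i * (g i : Ring' k n)) =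
            (fb (k := k) a b ^ 2) * (ω * s) := by
          rw [← hsq, hfb, sel_mul_free hfree, hs]
        rw [heq]
        apply Submodule.mem_sup_left
        exact Ideal.mul_mem_right _ _ (fb_sq_mem A B ha hb hab)
    · have hfree : ∀ d ∈ ((g i : Ring' k n)).support, efree A d :=
        free_of_vars hdisj (hSvars _ hg)
      obtain ⟨s, hs⟩ := sel_wcond_dvd A (f i)
      have heq : sel (wcond A) (f i * (g i : Ring' k n)) =
          (g i : Ring' k n) * (ω * s) := by
        rw [sel_mul_free hfree, hs]
      rw [heq]
      apply Submodule.mem_sup_right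
      have h3 : (g i : Ring' k n) * (ω * s) = ((g i : Ring' k n) * s) * ω := by ring
      rw [h3]
      exact Ideal.mul_mem_mul (Ideal.mul_mem_right s _ (Ideal.subset_span hg))
        (Ideal.subset_span rfl)
  have hfin : c * ω = c₀ * ω + (c - c₀) * ω := by ring
  rw [hfin]
  exact Ideal.add_mem _ h2 (Submodule.mem_sup_left hc1F)

/-- in characteristic `2`, with `P = P(A,B)` for disjoint `A, B` and
`Q` an ideal generated by polynomials involving only the variables `{x_i, y_i : i ∈ B}`,
one has `(P^{[2]} + Q) ∩ (P^{[2]} + (ω_A)) = P^{[2]} + Q·(ω_A)`. -/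
theorem intersection_ideals (k : Type*) [Field k] [CharP k 2] (n : ℕ)
    (A B : Finset (Fin n)) (hdisj : Disjoint A B)
    (Q : Ideal (Ring' k n))
    (hQ : ∃ S : Set (Ring' k n),
      (∀ g ∈ S, ∀ w ∈ g.vars, ∃ i ∈ B, w = Sum.inl i ∨ w = Sum.inr i) ∧
        Q = Ideal.span S) :
    (frobPow (PAB (k := k) A B) 2 ⊔ Q) ⊓
        (frobPow (PAB (k := k) A B) 2 ⊔ Ideal.span {omegaA (k := k) A})
      = frobPow (PAB (k := k) A B) 2 ⊔ Q * Ideal.span {omegaA (k := k) A} := by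
  obtain ⟨S, hSvars, rfl⟩ := hQ
  set F := frobPow (PAB (k := k) A B) 2 with hFdef
  set ω := omegaA (k := k) A with hωdef
  apply le_antisymm
  · intro p hp
    rw [Submodule.mem_inf] at hp
    obtain ⟨hp1, hp2⟩ := hp
    obtain ⟨v, hv, t, ht, rfl⟩ := Submodule.mem_sup.mp hp2
    obtain ⟨c, rfl⟩ := Ideal.mem_span_singleton'.mp ht
    have hcw : c * ω ∈ F ⊔ Ideal.span S := by
      have hv' : v ∈ F ⊔ Ideal.span S := Submodule.mem_sup_left hv
      have := Ideal.sub_mem _ hp1 hv'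
      simpa using this
    have hmain := key_lemma k n A B hdisj S hSvars c hcw
    exact Ideal.add_mem _ (Submodule.mem_sup_left hv) hmain
  · apply sup_le
    · exact le_inf le_sup_left le_sup_left
    · apply le_inf
      · exact le_trans (Ideal.mul_le_left : Ideal.span S * Ideal.span {ω} ≤ Ideal.span S) le_sup_right
      · exact le_trans (Ideal.mul_le_right : Ideal.span S * Ideal.span {ω} ≤ Ideal.span {ω}) le_sup_right


end BEI
end
end

section
/- Let n ≥ 5 be an odd integer, let k be a field of characteristic 2, and let G be the complement of the cycle graph C_n on {1,…,n}. Then J_G^{[2]} : J_G ⊆ m^{[2]}; in particular, by Fedder's criterion, R/J_G is not F-pure. -/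
open MvPolynomial

noncomputable section

namespace BEI

variable {k : Type*} [CommRing k] {n : ℕ}

/-- The binomial edge ideal `J_G` of a graph `G` on `{1,…,n}`. -/
def beIdeal (G : SimpleGraph (Fin n)) : Ideal (Ring' k n) :=
  Ideal.span {g | ∃ i j, G.Adj i j ∧ g = fb i j}

/-- The graded maximal ideal `m = (x_1,…,x_n,y_1,…,y_n)`. -/
def maxIdeal (k : Type*) [CommRing k] (n : ℕ) : Ideal (Ring' k n) :=
  Ideal.span (Set.range (X : (Fin n ⊕ Fin n) → Ring' k n))

/-- The cycle graph `C_n` on `{0,…,n-1}`: the edges are the pairs `{i, i+1 mod n}`. -/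
def cycleG (n : ℕ) : SimpleGraph (Fin n) :=
  SimpleGraph.fromRel (fun i j => ((i : ℕ) + 1) % n = (j : ℕ))

/-! ### Auxiliary development: exponent vectors -/

section ExpVec

open Sum

variable (n) in
/-- Exponent vectors built from a pair of functions (x-exponents, y-exponents). -/
def XV (fx fy : Fin n → ℕ) : (Fin n ⊕ Fin n) →₀ ℕ :=
  Finsupp.equivFunOnFinite.symm (Sum.elim fx fy)

@[simp] lemma XV_inl (fx fy : Fin n → ℕ) (i : Fin n) : XV n fx fy (Sum.inl i) = fx i := rfl

@[simp] lemma XV_inr (fx fy : Fin n → ℕ) (i : Fin n) : XV n fx fy (Sum.inr i) = fy i := rfl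

lemma XV_ext {fx fy gx gy : Fin n → ℕ} (hx : ∀ i, fx i = gx i) (hy : ∀ i, fy i = gy i) :
    XV n fx fy = XV n gx gy := by
  ext s
  cases s with
  | inl i => simpa using hx i
  | inr i => simpa using hy i

lemma XV_sub (fx fy gx gy : Fin n → ℕ) :
    XV n fx fy - XV n gx gy = XV n (fun i => fx i - gx i) (fun i => fy i - gy i) := by
  ext s
  cases s with
  | inl i => simp [Finsupp.tsub_apply]
  | inr i => simp [Finsupp.tsub_apply]

lemma le_XV_iff {fx fy gx gy : Fin n → ℕ} :
    XV n fx fy ≤ XV n gx gy ↔ (∀ i, fx i ≤ gx i) ∧ (∀ i, fy i ≤ gy i) := by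
  constructor
  · intro h
    exact ⟨fun i => h (Sum.inl i), fun i => h (Sum.inr i)⟩
  · rintro ⟨h1, h2⟩ s
    cases s with
    | inl i => simpa using h1 i
    | inr i => simpa using h2 i

variable (n) in
/-- The full squarefree exponent vector, of `x_1 y_1 ⋯ x_n y_n`. -/
def Fullv : (Fin n ⊕ Fin n) →₀ ℕ := XV n (fun _ => 1) (fun _ => 1)

@[simp] lemma Fullv_apply (s : Fin n ⊕ Fin n) : Fullv n s = 1 := by
  cases s <;> rfl

/-- exponent of `x_u² y_v² ∏_{i ≠ u,v} x_i y_i`. -/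
def pexp (u v : Fin n) : (Fin n ⊕ Fin n) →₀ ℕ :=
  XV n (fun i => if i = u then 2 else if i = v then 0 else 1)
    (fun i => if i = v then 2 else if i = u then 0 else 1)

/-- exponent of `x_c² y_d²`. -/
def patv (c d : Fin n) : (Fin n ⊕ Fin n) →₀ ℕ :=
  XV n (fun i => if i = c then 2 else 0) (fun i => if i = d then 2 else 0)

/-- exponent of `x_c y_d`. -/
def eab (c d : Fin n) : (Fin n ⊕ Fin n) →₀ ℕ :=
  XV n (fun i => if i = c then 1 else 0) (fun i => if i = d then 1 else 0)

def M1 (a b : Fin n) : (Fin n ⊕ Fin n) →₀ ℕ :=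
  XV n (fun i => if i = a then 3 else if i = b then 0 else 1)
    (fun i => if i = b then 3 else if i = a then 0 else 1)

def M2 (a b : Fin n) : (Fin n ⊕ Fin n) →₀ ℕ :=
  XV n (fun i => if i = b then 2 else 1) (fun i => if i = a then 2 else 1)

def N1 (a b e : Fin n) : (Fin n ⊕ Fin n) →₀ ℕ :=
  XV n (fun i => if i = a then 3 else if i = e then 0 else 1)
    (fun i => if i = a then 0 else if i = b then 2 else if i = e then 2 else 1)

def N3 (a b e : Fin n) : (Fin n ⊕ Fin n) →₀ ℕ :=
  XV n (fun i => if i = e then 2 else 1)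
    (fun i => if i = e then 0 else if i = a then 2 else if i = b then 2 else 1)

lemma patv_le_XV {c d : Fin n} {fx fy : Fin n → ℕ} :
    patv c d ≤ XV n fx fy ↔ 2 ≤ fx c ∧ 2 ≤ fy d := by
  rw [patv, le_XV_iff]
  constructor
  · rintro ⟨h1, h2⟩
    have hc := h1 c
    have hd := h2 d
    simp only [if_pos rfl] at hc hd
    exact ⟨hc, hd⟩
  · rintro ⟨h1, h2⟩
    constructor
    · intro i
      by_cases h : i = c
      · subst h; simpa using h1
      · simp [h]
    · intro i
      by_cases h : i = d
      · subst h; simpa using h2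
      · simp [h]

lemma eab_le_XV {c d : Fin n} {fx fy : Fin n → ℕ} :
    eab c d ≤ XV n fx fy ↔ 1 ≤ fx c ∧ 1 ≤ fy d := by
  rw [eab, le_XV_iff]
  constructor
  · rintro ⟨h1, h2⟩
    have hc := h1 c
    have hd := h2 d
    simp only [if_pos rfl] at hc hd
    exact ⟨hc, hd⟩
  · rintro ⟨h1, h2⟩
    constructor
    · intro i
      by_cases h : i = c
      · subst h; simpa using h1
      · simp [h]
    · intro i
      by_cases h : i = d
      · subst h; simpa using h2
      · simp [h]

/-! divisibility characterizations -/

lemma patv_le_M1_iff {a b c d : Fin n} (hab : a ≠ b) :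
    patv c d ≤ M1 a b ↔ c = a ∧ d = b := by
  rw [M1, patv_le_XV]
  constructor
  · rintro ⟨h1, h2⟩
    constructor
    · by_contra hc; rw [if_neg hc] at h1; split_ifs at h1 <;> omega
    · by_contra hd; rw [if_neg hd] at h2; split_ifs at h2 <;> omega
  · rintro ⟨rfl, rfl⟩
    exact ⟨by simp, by simp⟩

lemma patv_le_M2_iff {a b c d : Fin n} :
    patv c d ≤ M2 a b ↔ c = b ∧ d = a := by
  rw [M2, patv_le_XV]
  constructor
  · rintro ⟨h1, h2⟩
    constructor
    · by_contra hc; rw [if_neg hc] at h1; omega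
    · by_contra hd; rw [if_neg hd] at h2; omega
  · rintro ⟨rfl, rfl⟩
    exact ⟨by simp, by simp⟩

lemma patv_le_N1_iff {a b e c d : Fin n} (hab : a ≠ b) (hae : a ≠ e) :
    patv c d ≤ N1 a b e ↔ c = a ∧ (d = b ∨ d = e) := by
  rw [N1, patv_le_XV]
  constructor
  · rintro ⟨h1, h2⟩
    constructor
    · by_contra hc; rw [if_neg hc] at h1; split_ifs at h1 <;> omega
    · by_cases hb : d = b
      · exact Or.inl hb
      · by_cases he : d = e
        · exact Or.inr he
        · exfalso
          by_cases ha : d = a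
          · rw [if_pos ha] at h2; omega
          · rw [if_neg ha, if_neg hb, if_neg he] at h2; omega
  · rintro ⟨rfl, hd⟩
    refine ⟨by simp, ?_⟩
    rcases hd with rfl | rfl
    · rw [if_neg (Ne.symm hab), if_pos rfl]
    · rw [if_neg (Ne.symm hae)]
      split_ifs <;> omega

lemma patv_le_N3_iff {a b e c d : Fin n} (hea : e ≠ a) (heb : e ≠ b) :
    patv c d ≤ N3 a b e ↔ c = e ∧ (d = a ∨ d = b) := by
  rw [N3, patv_le_XV]
  constructor
  · rintro ⟨h1, h2⟩
    constructor
    · by_contra hc; rw [if_neg hc] at h1; omega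
    · by_cases ha : d = a
      · exact Or.inl ha
      · by_cases hb : d = b
        · exact Or.inr hb
        · exfalso
          by_cases he : d = e
          · rw [if_pos he] at h2; omega
          · rw [if_neg he, if_neg ha, if_neg hb] at h2; omega
  · rintro ⟨rfl, hd⟩
    refine ⟨by simp, ?_⟩
    rcases hd with rfl | rfl
    · rw [if_neg (Ne.symm hea), if_pos rfl]
    · rw [if_neg (Ne.symm heb)]
      split_ifs <;> omega

/-! subtraction identities -/

lemma subM {a b : Fin n} (hab : a ≠ b) : M1 a b - patv a b = M2 a b - patv b a := by
  rw [M1, M2, patv, patv, XV_sub, XV_sub]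
  exact XV_ext (fun i => by split_ifs <;> first | omega | simp_all)
    (fun i => by split_ifs <;> first | omega | simp_all)

lemma subN_ab {a b e : Fin n} (hab : a ≠ b) (hae : a ≠ e) (hbe : b ≠ e) :
    N1 a b e - patv a b = N1 b a e - patv b a := by
  rw [N1, N1, patv, patv, XV_sub, XV_sub]
  exact XV_ext (fun i => by split_ifs <;> first | omega | simp_all)
    (fun i => by split_ifs <;> first | omega | simp_all)

lemma subN_ae {a b e : Fin n} (hab : a ≠ b) (hae : a ≠ e) (hbe : b ≠ e) :
    N1 a b e - patv a e = N3 a b e - patv e a := by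
  rw [N1, N3, patv, patv, XV_sub, XV_sub]
  exact XV_ext (fun i => by split_ifs <;> first | omega | simp_all)
    (fun i => by split_ifs <;> first | omega | simp_all)

lemma N3_symm (a b e : Fin n) : N3 a b e = N3 b a e := by
  rw [N3, N3]
  exact XV_ext (fun i => rfl) (fun i => by split_ifs <;> first | omega | simp_all)

lemma subN_be {a b e : Fin n} (hab : a ≠ b) (hae : a ≠ e) (hbe : b ≠ e) :
    N1 b a e - patv b e = N3 a b e - patv e b := by
  rw [N3_symm]
  exact subN_ae (Ne.symm hab) hbe hae

/-! subtraction identities used on the application side -/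

lemma subA_M1 {a b : Fin n} (hab : a ≠ b) : M1 a b - eab a b = pexp a b := by
  rw [M1, eab, pexp, XV_sub]
  exact XV_ext (fun i => by split_ifs <;> first | omega | simp_all)
    (fun i => by split_ifs <;> first | omega | simp_all)

lemma subA_M2 {a b : Fin n} (hab : a ≠ b) : M2 a b - eab a b = pexp b a := by
  rw [M2, eab, pexp, XV_sub]
  exact XV_ext (fun i => by split_ifs <;> first | omega | simp_all)
    (fun i => by split_ifs <;> first | omega | simp_all)

lemma subA_M2' {a b : Fin n} (hab : a ≠ b) : M2 a b - eab b a = Fullv n := by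
  rw [M2, eab, Fullv, XV_sub]
  exact XV_ext (fun i => by split_ifs <;> first | omega | simp_all)
    (fun i => by split_ifs <;> first | omega | simp_all)

lemma subA_N1 {a b e : Fin n} (hab : a ≠ b) (hae : a ≠ e) (hbe : b ≠ e) :
    N1 a b e - eab a b = pexp a e := by
  rw [N1, eab, pexp, XV_sub]
  exact XV_ext (fun i => by split_ifs <;> first | omega | simp_all)
    (fun i => by split_ifs <;> first | omega | simp_all)

lemma subA_N3a {a b e : Fin n} (hab : a ≠ b) (hae : a ≠ e) (hbe : b ≠ e) :
    N3 a b e - eab a b = pexp e a := by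
  rw [N3, eab, pexp, XV_sub]
  exact XV_ext (fun i => by split_ifs <;> first | omega | simp_all)
    (fun i => by split_ifs <;> first | omega | simp_all)

lemma subA_N3b {a b e : Fin n} (hab : a ≠ b) (hae : a ≠ e) (hbe : b ≠ e) :
    N3 a b e - eab b a = pexp e b := by
  rw [N3_symm]
  exact subA_N3a (Ne.symm hab) hbe hae

end ExpVec

/-! ### The ideal generated by squares of the binomial generators -/

section SqIdeal

variable (k n) in
def S2 : Ideal (Ring' k n) :=
  Ideal.span {q | ∃ a b, ((cycleG n)ᶜ).Adj a b ∧ q = (fb a b : Ring' k n) ^ 2}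

lemma single_single_eq_eab (c d : Fin n) :
    Finsupp.single (Sum.inl c) 1 + Finsupp.single (Sum.inr d) 1 = eab c d := by
  ext s
  cases s with
  | inl i =>
      simp only [Finsupp.add_apply, Finsupp.single_apply, eab, XV_inl]
      split_ifs <;> first | rfl | omega | simp_all
  | inr i =>
      simp only [Finsupp.add_apply, Finsupp.single_apply, eab, XV_inr]
      split_ifs <;> first | rfl | omega | simp_all

lemma X_mul_X_eq_monomial (c d : Fin n) :
    (X (Sum.inl c) * X (Sum.inr d) : Ring' k n) = monomial (eab c d) 1 := by
  have hX : ∀ s : Fin n ⊕ Fin n, (X s : Ring' k n) = monomial (Finsupp.single s 1) 1 := by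
    intro s
    rw [← pow_one (X s : Ring' k n), X_pow_eq_monomial]
  rw [hX, hX, monomial_mul, mul_one, single_single_eq_eab]

lemma fb_eq (a b : Fin n) :
    (fb a b : Ring' k n) = monomial (eab a b) 1 - monomial (eab b a) 1 := by
  rw [fb, xv, yv, xv, yv, X_mul_X_eq_monomial, X_mul_X_eq_monomial]

lemma two_smul_eab (c d : Fin n) : (2 : ℕ) • eab c d = patv c d := by
  ext s
  cases s with
  | inl i =>
      simp only [Finsupp.smul_apply, eab, patv, XV_inl, smul_eq_mul]
      split_ifs <;> rfl
  | inr i =>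
      simp only [Finsupp.smul_apply, eab, patv, XV_inr, smul_eq_mul]
      split_ifs <;> rfl

lemma fbsq [CharP k 2] (a b : Fin n) :
    (fb a b : Ring' k n) ^ 2 = monomial (patv a b) 1 + monomial (patv b a) 1 := by
  rw [fb_eq, CharTwo.sub_eq_add, CharTwo.add_sq, monomial_pow, monomial_pow, one_pow,
    two_smul_eab, two_smul_eab]

lemma frob_le_S2 [CharP k 2] :
    frobPow (beIdeal (k := k) (cycleG n)ᶜ) 2 ≤ S2 k n := by
  rw [frobPow, Ideal.span_le]
  rintro q ⟨f, hf, rfl⟩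
  have main : ∀ f ∈ beIdeal (k := k) (cycleG n)ᶜ, f ^ 2 ∈ S2 k n := by
    intro f hf
    induction hf using Submodule.span_induction with
    | mem x hx =>
        obtain ⟨i, j, hadj, rfl⟩ := hx
        exact Ideal.subset_span ⟨i, j, hadj, rfl⟩
    | zero => simp
    | add x y _ _ hx hy =>
        rw [add_pow_char]
        exact Ideal.add_mem _ hx hy
    | smul r x _ hx =>
        rw [smul_eq_mul, mul_pow]
        exact Ideal.mul_mem_left _ _ hx
  exact main f hf

end SqIdeal

/-! ### The three vanishing functionals -/

section Vanish

variable [CharP k 2]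

private lemma addself (x : k) : x + x = 0 := CharTwo.add_self_eq_zero x

lemma lam1 {a b : Fin n} (hab : a ≠ b) {u : Ring' k n} (hu : u ∈ S2 k n) :
    coeff (M1 a b) u + coeff (M2 a b) u = 0 := by
  obtain ⟨cf, hsupp, rfl⟩ := Submodule.mem_span_set.mp hu
  rw [Finsupp.sum, coeff_sum, coeff_sum, ← Finset.sum_add_distrib]
  refine Finset.sum_eq_zero fun f hf => ?_
  obtain ⟨i, j, hadj, rfl⟩ := hsupp hf
  have hij : i ≠ j := hadj.ne
  set r : Ring' k n := cf (fb i j ^ 2) with hr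
  rw [smul_eq_mul, fbsq, mul_add, coeff_add, coeff_add,
    coeff_mul_monomial', coeff_mul_monomial', coeff_mul_monomial', coeff_mul_monomial']
  simp only [mul_one]
  have C1 := patv_le_M1_iff (c := i) (d := j) hab
  have C2 := patv_le_M1_iff (c := j) (d := i) hab
  have C3 := patv_le_M2_iff (a := a) (b := b) (c := i) (d := j)
  have C4 := patv_le_M2_iff (a := a) (b := b) (c := j) (d := i)
  by_cases hia : i = a
  · by_cases hjb : j = b
    · rw [if_pos (C1.mpr ⟨hia, hjb⟩),
        if_neg (fun h => hab ((C2.mp h).1.symm.trans hjb)),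
        if_neg (fun h => hab (hia.symm.trans (C3.mp h).1)),
        if_pos (C4.mpr ⟨hjb, hia⟩)]
      rw [hia, hjb, subM hab]
      simp only [add_zero, zero_add]
      exact addself _
    · rw [if_neg (fun h => hjb (C1.mp h).2),
        if_neg (fun h => hij (hia.trans (C2.mp h).1.symm)),
        if_neg (fun h => hab (hia.symm.trans (C3.mp h).1)),
        if_neg (fun h => hjb (C4.mp h).1)]
      simp
  · by_cases hib : i = b
    · by_cases hja : j = a
      · rw [if_neg (fun h => hia (C1.mp h).1),
          if_pos (C2.mpr ⟨hja, hib⟩),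
          if_pos (C3.mpr ⟨hib, hja⟩),
          if_neg (fun h => hia (C4.mp h).2)]
        rw [hib, hja, subM hab]
        simp only [add_zero, zero_add]
        exact addself _
      · rw [if_neg (fun h => hia (C1.mp h).1),
          if_neg (fun h => hja (C2.mp h).1),
          if_neg (fun h => hja (C3.mp h).2),
          if_neg (fun h => hia (C4.mp h).2)]
        simp
    · rw [if_neg (fun h => hia (C1.mp h).1),
        if_neg (fun h => hib (C2.mp h).2),
        if_neg (fun h => hib (C3.mp h).1),
        if_neg (fun h => hia (C4.mp h).2)]
      simp

lemma lam2 {a b e : Fin n} (hab : a ≠ b) (hae : a ≠ e) (hbe : b ≠ e)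
    {u : Ring' k n} (hu : u ∈ S2 k n) :
    coeff (N1 a b e) u + coeff (N1 b a e) u + coeff (N3 a b e) u = 0 := by
  obtain ⟨cf, hsupp, rfl⟩ := Submodule.mem_span_set.mp hu
  rw [Finsupp.sum, coeff_sum, coeff_sum, coeff_sum, ← Finset.sum_add_distrib,
    ← Finset.sum_add_distrib]
  refine Finset.sum_eq_zero fun f hf => ?_
  obtain ⟨i, j, hadj, rfl⟩ := hsupp hf
  have hij : i ≠ j := hadj.ne
  set r : Ring' k n := cf (fb i j ^ 2) with hr
  rw [smul_eq_mul, fbsq, mul_add, coeff_add, coeff_add, coeff_add,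
    coeff_mul_monomial', coeff_mul_monomial', coeff_mul_monomial', coeff_mul_monomial',
    coeff_mul_monomial', coeff_mul_monomial']
  simp only [mul_one]
  have C1 := patv_le_N1_iff (c := i) (d := j) hab hae
  have C2 := patv_le_N1_iff (c := j) (d := i) hab hae
  have C3 := patv_le_N1_iff (c := i) (d := j) (Ne.symm hab) hbe
  have C4 := patv_le_N1_iff (c := j) (d := i) (Ne.symm hab) hbe
  have C5 := patv_le_N3_iff (c := i) (d := j) (Ne.symm hae) (Ne.symm hbe)
  have C6 := patv_le_N3_iff (c := j) (d := i) (Ne.symm hae) (Ne.symm hbe)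
  by_cases hia : i = a
  · by_cases hjb : j = b
    · rw [if_pos (C1.mpr ⟨hia, Or.inl hjb⟩),
        if_neg (fun h => hab ((C2.mp h).1.symm.trans hjb)),
        if_neg (fun h => hab (hia.symm.trans (C3.mp h).1)),
        if_pos (C4.mpr ⟨hjb, Or.inl hia⟩),
        if_neg (fun h => hae (hia.symm.trans (C5.mp h).1)),
        if_neg (fun h => hbe (hjb.symm.trans (C6.mp h).1))]
      rw [hia, hjb, subN_ab hab hae hbe]
      simp only [add_zero, zero_add]
      exact addself _
    · by_cases hje : j = e
      · rw [if_pos (C1.mpr ⟨hia, Or.inr hje⟩),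
          if_neg (fun h => hae ((C2.mp h).1.symm.trans hje)),
          if_neg (fun h => hab (hia.symm.trans (C3.mp h).1)),
          if_neg (fun h => hjb (C4.mp h).1),
          if_neg (fun h => hae (hia.symm.trans (C5.mp h).1)),
          if_pos (C6.mpr ⟨hje, Or.inl hia⟩)]
        rw [hia, hje, subN_ae hab hae hbe]
        simp only [add_zero, zero_add]
        exact addself _
      · rw [if_neg (fun h => (C1.mp h).2.elim hjb hje),
          if_neg (fun h => hij (hia.trans (C2.mp h).1.symm)),
          if_neg (fun h => hab (hia.symm.trans (C3.mp h).1)),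
          if_neg (fun h => hjb (C4.mp h).1),
          if_neg (fun h => hae (hia.symm.trans (C5.mp h).1)),
          if_neg (fun h => hje (C6.mp h).1)]
        simp
  · by_cases hib : i = b
    · by_cases hja : j = a
      · rw [if_neg (fun h => hia (C1.mp h).1),
          if_pos (C2.mpr ⟨hja, Or.inl hib⟩),
          if_pos (C3.mpr ⟨hib, Or.inl hja⟩),
          if_neg (fun h => hab (hja.symm.trans (C4.mp h).1)),
          if_neg (fun h => hbe (hib.symm.trans (C5.mp h).1)),
          if_neg (fun h => hae (hja.symm.trans (C6.mp h).1))]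
        rw [hib, hja, subN_ab hab hae hbe]
        simp only [add_zero, zero_add]
        exact addself _
      · by_cases hje : j = e
        · rw [if_neg (fun h => hia (C1.mp h).1),
            if_neg (fun h => hja (C2.mp h).1),
            if_pos (C3.mpr ⟨hib, Or.inr hje⟩),
            if_neg (fun h => hbe ((C4.mp h).1.symm.trans hje)),
            if_neg (fun h => hbe (hib.symm.trans (C5.mp h).1)),
            if_pos (C6.mpr ⟨hje, Or.inr hib⟩)]
          rw [hib, hje, subN_be hab hae hbe]
          simp only [add_zero, zero_add]
          exact addself _
        · rw [if_neg (fun h => hia (C1.mp h).1),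
            if_neg (fun h => hja (C2.mp h).1),
            if_neg (fun h => (C3.mp h).2.elim hja hje),
            if_neg (fun h => hij (hib.trans (C4.mp h).1.symm)),
            if_neg (fun h => hbe (hib.symm.trans (C5.mp h).1)),
            if_neg (fun h => hje (C6.mp h).1)]
          simp
    · by_cases hie : i = e
      · by_cases hja : j = a
        · rw [if_neg (fun h => hia (C1.mp h).1),
            if_pos (C2.mpr ⟨hja, Or.inr hie⟩),
            if_neg (fun h => hib (C3.mp h).1),
            if_neg (fun h => hab (hja.symm.trans (C4.mp h).1)),
            if_pos (C5.mpr ⟨hie, Or.inl hja⟩),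
            if_neg (fun h => hae (hja.symm.trans (C6.mp h).1))]
          rw [hie, hja, subN_ae hab hae hbe]
          simp only [add_zero, zero_add]
          exact addself _
        · by_cases hjb : j = b
          · rw [if_neg (fun h => hia (C1.mp h).1),
              if_neg (fun h => hab ((C2.mp h).1.symm.trans hjb)),
              if_neg (fun h => hib (C3.mp h).1),
              if_pos (C4.mpr ⟨hjb, Or.inr hie⟩),
              if_pos (C5.mpr ⟨hie, Or.inr hjb⟩),
              if_neg (fun h => hbe (hjb.symm.trans (C6.mp h).1))]
            rw [hie, hjb, subN_be hab hae hbe]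
            simp only [add_zero, zero_add]
            exact addself _
          · rw [if_neg (fun h => hia (C1.mp h).1),
              if_neg (fun h => hja (C2.mp h).1),
              if_neg (fun h => hib (C3.mp h).1),
              if_neg (fun h => hjb (C4.mp h).1),
              if_neg (fun h => (C5.mp h).2.elim hja hjb),
              if_neg (fun h => hij (hie.trans (C6.mp h).1.symm))]
            simp
      · rw [if_neg (fun h => hia (C1.mp h).1),
          if_neg (fun h => (C2.mp h).2.elim hib hie),
          if_neg (fun h => hib (C3.mp h).1),
          if_neg (fun h => (C4.mp h).2.elim hia hie),
          if_neg (fun h => hie (C5.mp h).1),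
          if_neg (fun h => (C6.mp h).2.elim hia hib)]
        simp

lemma lam3 {a b e : Fin n} (hea : e ≠ a) (heb : e ≠ b)
    (hna : ¬((cycleG n)ᶜ).Adj e a) (hnb : ¬((cycleG n)ᶜ).Adj e b)
    {u : Ring' k n} (hu : u ∈ S2 k n) :
    coeff (N3 a b e) u = 0 := by
  obtain ⟨cf, hsupp, rfl⟩ := Submodule.mem_span_set.mp hu
  rw [Finsupp.sum, coeff_sum]
  refine Finset.sum_eq_zero fun f hf => ?_
  obtain ⟨i, j, hadj, rfl⟩ := hsupp hf
  set r : Ring' k n := cf (fb i j ^ 2) with hr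
  rw [smul_eq_mul, fbsq, mul_add, coeff_add, coeff_mul_monomial', coeff_mul_monomial']
  have C5 := patv_le_N3_iff (c := i) (d := j) hea heb
  have C6 := patv_le_N3_iff (c := j) (d := i) hea heb
  rw [if_neg, if_neg]
  · simp
  · intro h
    obtain ⟨h1, hd⟩ := C6.mp h
    rcases hd with h2 | h2
    · exact hna (by rw [← h1, ← h2]; exact hadj.symm)
    · exact hnb (by rw [← h1, ← h2]; exact hadj.symm)
  · intro h
    obtain ⟨h1, hd⟩ := C5.mp h
    rcases hd with h2 | h2
    · exact hna (by rw [← h1, ← h2]; exact hadj)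
    · exact hnb (by rw [← h1, ← h2]; exact hadj)

end Vanish

/-! ### Application-side computations -/

section Apply

variable [CharP k 2]

lemma coeff_g_mul_fb (g : Ring' k n) (a b : Fin n) (M : (Fin n ⊕ Fin n) →₀ ℕ) :
    coeff M (g * fb a b) =
      (if eab a b ≤ M then coeff (M - eab a b) g else 0) +
      (if eab b a ≤ M then coeff (M - eab b a) g else 0) := by
  rw [fb_eq, CharTwo.sub_eq_add, mul_add, coeff_add, coeff_mul_monomial', coeff_mul_monomial']
  simp only [mul_one]

lemma hP1 {g : Ring' k n} {a b : Fin n} (hab : a ≠ b)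
    (h : g * fb a b ∈ S2 k n) :
    coeff (pexp a b) g + (coeff (pexp b a) g + coeff (Fullv n) g) = 0 := by
  have H := lam1 hab h
  rw [coeff_g_mul_fb, coeff_g_mul_fb] at H
  have t1 : eab a b ≤ M1 a b := by
    rw [M1]; exact eab_le_XV.mpr ⟨by simp, by simp⟩
  have t2 : ¬ eab b a ≤ M1 a b := by
    rw [M1, eab_le_XV]
    rintro ⟨h1, h2⟩
    rw [if_neg (Ne.symm hab), if_pos rfl] at h1
    omega
  have t3 : eab a b ≤ M2 a b := by
    rw [M2]
    refine eab_le_XV.mpr ⟨?_, ?_⟩ <;> (split_ifs <;> omega)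
  have t4 : eab b a ≤ M2 a b := by
    rw [M2]
    refine eab_le_XV.mpr ⟨?_, ?_⟩ <;> (split_ifs <;> omega)
  rw [if_pos t1, if_neg t2, if_pos t3, if_pos t4] at H
  rw [subA_M1 hab, subA_M2 hab, subA_M2' hab, add_zero] at H
  exact H

lemma hP2 {g : Ring' k n} {a b e : Fin n} (hab : a ≠ b) (hae : a ≠ e) (hbe : b ≠ e)
    (h : g * fb a b ∈ S2 k n) :
    coeff (pexp a e) g + coeff (pexp b e) g +
      (coeff (pexp e a) g + coeff (pexp e b) g) = 0 := by
  have H := lam2 hab hae hbe h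
  rw [coeff_g_mul_fb, coeff_g_mul_fb, coeff_g_mul_fb] at H
  have t1 : eab a b ≤ N1 a b e := by
    rw [N1]
    refine eab_le_XV.mpr ⟨by simp, ?_⟩
    rw [if_neg (Ne.symm hab), if_pos rfl]
    omega
  have t2 : ¬ eab b a ≤ N1 a b e := by
    rw [N1, eab_le_XV]
    rintro ⟨h1, h2⟩
    rw [if_pos rfl] at h2
    omega
  have t3 : ¬ eab a b ≤ N1 b a e := by
    rw [N1, eab_le_XV]
    rintro ⟨h1, h2⟩
    rw [if_pos rfl] at h2
    omega
  have t4 : eab b a ≤ N1 b a e := by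
    rw [N1]
    refine eab_le_XV.mpr ⟨by simp, ?_⟩
    rw [if_neg hab, if_pos rfl]
    omega
  have t5 : eab a b ≤ N3 a b e := by
    rw [N3]
    refine eab_le_XV.mpr ⟨by split_ifs <;> omega, ?_⟩
    rw [if_neg hbe, if_neg (Ne.symm hab), if_pos rfl]
    omega
  have t6 : eab b a ≤ N3 a b e := by
    rw [N3]
    refine eab_le_XV.mpr ⟨by split_ifs <;> omega, ?_⟩
    rw [if_neg hae, if_pos rfl]
    omega
  rw [if_pos t1, if_neg t2, if_neg t3, if_pos t4, if_pos t5, if_pos t6] at H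
  rw [subA_N1 hab hae hbe, subA_N1 (Ne.symm hab) hbe hae,
    subA_N3a hab hae hbe, subA_N3b hab hae hbe] at H
  rw [add_zero, zero_add] at H
  exact H

lemma hP3 {g : Ring' k n} {a b e : Fin n} (hab : a ≠ b) (hea : e ≠ a) (heb : e ≠ b)
    (hna : ¬((cycleG n)ᶜ).Adj e a) (hnb : ¬((cycleG n)ᶜ).Adj e b)
    (h : g * fb a b ∈ S2 k n) :
    coeff (pexp e a) g + coeff (pexp e b) g = 0 := by
  have H := lam3 hea heb hna hnb h
  rw [coeff_g_mul_fb] at H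
  have t5 : eab a b ≤ N3 a b e := by
    rw [N3]
    refine eab_le_XV.mpr ⟨by split_ifs <;> omega, ?_⟩
    rw [if_neg (Ne.symm heb), if_neg (Ne.symm hab), if_pos rfl]
    omega
  have t6 : eab b a ≤ N3 a b e := by
    rw [N3]
    refine eab_le_XV.mpr ⟨by split_ifs <;> omega, ?_⟩
    rw [if_neg (Ne.symm hea), if_pos rfl]
    omega
  rw [if_pos t5, if_pos t6] at H
  rw [subA_N3a hab (Ne.symm hea) (Ne.symm heb), subA_N3b hab (Ne.symm hea) (Ne.symm heb)] at H
  exact H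

end Apply

/-! ### Cycle arithmetic in `Fin n` -/

open Fin.NatCast Fin.CommRing

section Cycle

lemma succ_val_iff [NeZero n] (hn : 2 ≤ n) {i j : Fin n} :
    ((i : ℕ) + 1) % n = (j : ℕ) ↔ i + 1 = j := by
  rw [Fin.ext_iff, Fin.val_add, Fin.val_one']
  have h1 : 1 % n = 1 := Nat.mod_eq_of_lt (by omega)
  rw [h1]

lemma adjC_iff [NeZero n] (hn : 2 ≤ n) {i j : Fin n} :
    ((cycleG n)ᶜ).Adj i j ↔ i ≠ j ∧ j ≠ i + 1 ∧ i ≠ j + 1 := by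
  rw [SimpleGraph.compl_adj, cycleG, SimpleGraph.fromRel_adj]
  constructor
  · rintro ⟨hne, h⟩
    rw [not_and, not_or] at h
    have h2 := h hne
    exact ⟨hne, fun hj => h2.1 ((succ_val_iff hn).mpr hj.symm),
      fun hi => h2.2 ((succ_val_iff hn).mpr hi.symm)⟩
  · rintro ⟨hne, h1, h2⟩
    refine ⟨hne, ?_⟩
    rw [not_and, not_or]
    intro _
    exact ⟨fun he => h1 ((succ_val_iff hn).mp he).symm,
      fun he => h2 ((succ_val_iff hn).mp he).symm⟩

lemma shift_inj [NeZero n] (e : Fin n) {d d' : ℕ} (hd : d < n) (hd' : d' < n) :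
    e + (d : Fin n) = e + (d' : Fin n) ↔ d = d' := by
  constructor
  · intro h
    have h2 : (d : Fin n) = (d' : Fin n) := add_left_cancel h
    have h3 := congrArg Fin.val h2
    rwa [Fin.val_natCast, Fin.val_natCast, Nat.mod_eq_of_lt hd, Nat.mod_eq_of_lt hd'] at h3
  · rintro rfl; rfl

lemma shift_ne [NeZero n] (e : Fin n) {d d' : ℕ} (hd : d < n) (hd' : d' < n) (h : d ≠ d') :
    e + (d : Fin n) ≠ e + (d' : Fin n) :=
  fun hh => h ((shift_inj e hd hd').mp hh)

lemma shift_add_one [NeZero n] (e : Fin n) (d : ℕ) :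
    e + (d : Fin n) + 1 = e + ((d + 1 : ℕ) : Fin n) := by
  push_cast
  ring

lemma shift_zero [NeZero n] (e : Fin n) : e + ((0 : ℕ) : Fin n) = e := by
  push_cast
  ring

lemma shift_total [NeZero n] (e : Fin n) {d d' : ℕ} (h : d + d' = n) :
    e + (d : Fin n) + (d' : Fin n) = e := by
  rw [add_assoc, ← Nat.cast_add, h, Fin.natCast_self, add_zero]

lemma shift_wrap [NeZero n] (hn : 1 ≤ n) (e : Fin n) :
    e + ((n - 1 : ℕ) : Fin n) + 1 = e := by
  rw [shift_add_one]
  have h : (n - 1 + 1 : ℕ) = n := by omega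
  rw [h, Fin.natCast_self, add_zero]

end Cycle

/-! ### The main coefficient lemma -/

section MainLemma

variable [CharP k 2]

lemma coeff_full_zero (hn : 5 ≤ n) (hodd : Odd n) (g : Ring' k n)
    (hyp : ∀ a b : Fin n, ((cycleG n)ᶜ).Adj a b → g * fb a b ∈ S2 k n) :
    coeff (Fullv n) g = 0 := by
  haveI : NeZero n := ⟨by omega⟩
  have hn2 : 2 ≤ n := by omega
  have htwo : (2 : k) = 0 := CharTwo.two_eq_zero
  set Pc : Fin n → Fin n → k := fun u v => coeff (pexp u v) g with hPc
  set cF : k := coeff (Fullv n) g with hcF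
  have hd1 : ∀ (e : Fin n) (d d' : ℕ), d < n → d' < n → d ≠ d' →
      e + (d : Fin n) ≠ e + (d' : Fin n) := fun e _ _ hd hd' h => shift_ne e hd hd' h
  have hL1 : ∀ a b : Fin n, ((cycleG n)ᶜ).Adj a b → Pc a b + (Pc b a + cF) = 0 :=
    fun a b hadj => hP1 hadj.ne (hyp a b hadj)
  have hL2 : ∀ a b e : Fin n, ((cycleG n)ᶜ).Adj a b → a ≠ e → b ≠ e →
      Pc a e + Pc b e + (Pc e a + Pc e b) = 0 :=
    fun a b e hadj hae hbe => hP2 hadj.ne hae hbe (hyp a b hadj)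
  -- step 1 : D(e, e+1) = cF for all e
  have hD : ∀ e : Fin n, Pc e (e + ((1 : ℕ) : Fin n)) + Pc (e + ((1 : ℕ) : Fin n)) e = cF := by
    intro e
    have he0 : e = e + ((0 : ℕ) : Fin n) := (shift_zero e).symm
    have hadj_bw : ((cycleG n)ᶜ).Adj (e + ((1 : ℕ) : Fin n)) (e + ((3 : ℕ) : Fin n)) := by
      rw [adjC_iff hn2]
      refine ⟨hd1 e 1 3 (by omega) (by omega) (by omega), ?_, ?_⟩
      · rw [shift_add_one]
        exact hd1 e 3 2 (by omega) (by omega) (by omega)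
      · rw [shift_add_one]
        exact hd1 e 1 4 (by omega) (by omega) (by omega)
    have hadj_ew : ((cycleG n)ᶜ).Adj e (e + ((3 : ℕ) : Fin n)) := by
      rw [adjC_iff hn2]
      refine ⟨?_, ?_, ?_⟩
      · nth_rewrite 1 [he0]
        exact hd1 e 0 3 (by omega) (by omega) (by omega)
      · nth_rewrite 2 [he0]
        rw [shift_add_one]
        exact hd1 e 3 1 (by omega) (by omega) (by omega)
      · nth_rewrite 1 [he0]
        rw [shift_add_one]
        exact hd1 e 0 4 (by omega) (by omega) (by omega)
    have hbe : e + ((1 : ℕ) : Fin n) ≠ e := by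
      nth_rewrite 2 [he0]
      exact hd1 e 1 0 (by omega) (by omega) (by omega)
    have hwe : e + ((3 : ℕ) : Fin n) ≠ e := by
      nth_rewrite 2 [he0]
      exact hd1 e 3 0 (by omega) (by omega) (by omega)
    have h2 := hL2 (e + ((1 : ℕ) : Fin n)) (e + ((3 : ℕ) : Fin n)) e hadj_bw hbe hwe
    have h1 := hL1 e (e + ((3 : ℕ) : Fin n)) hadj_ew
    linear_combination h2 + h1 -
      (Pc (e + ((3 : ℕ) : Fin n)) e + Pc e (e + ((3 : ℕ) : Fin n)) + cF) * htwo
  -- step 2 : flip relation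
  have hF : ∀ e : Fin n, Pc e (e + ((n - 1 : ℕ) : Fin n)) = Pc e (e + ((1 : ℕ) : Fin n)) := by
    intro e
    have he0 : e = e + ((0 : ℕ) : Fin n) := (shift_zero e).symm
    have hea : e ≠ e + ((n - 1 : ℕ) : Fin n) := by
      nth_rewrite 1 [he0]
      exact hd1 e 0 (n - 1) (by omega) (by omega) (by omega)
    have heb : e ≠ e + ((1 : ℕ) : Fin n) := by
      nth_rewrite 1 [he0]
      exact hd1 e 0 1 (by omega) (by omega) (by omega)
    have hab : e + ((n - 1 : ℕ) : Fin n) ≠ e + ((1 : ℕ) : Fin n) :=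
      hd1 e (n - 1) 1 (by omega) (by omega) (by omega)
    have hadj_ab : ((cycleG n)ᶜ).Adj (e + ((n - 1 : ℕ) : Fin n)) (e + ((1 : ℕ) : Fin n)) := by
      rw [adjC_iff hn2]
      refine ⟨hab, ?_, ?_⟩
      · rw [shift_wrap (by omega)]
        exact Ne.symm heb
      · rw [shift_add_one]
        exact hd1 e (n - 1) 2 (by omega) (by omega) (by omega)
    have hna : ¬((cycleG n)ᶜ).Adj e (e + ((n - 1 : ℕ) : Fin n)) := by
      rw [adjC_iff hn2]
      rintro ⟨-, -, h3⟩
      exact h3 (shift_wrap (by omega) e).symm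
    have hnb : ¬((cycleG n)ᶜ).Adj e (e + ((1 : ℕ) : Fin n)) := by
      rw [adjC_iff hn2]
      rintro ⟨-, h2', -⟩
      refine h2' ?_
      nth_rewrite 2 [he0]
      rw [shift_add_one]
    have h3 := hP3 hab hea heb hna hnb (hyp _ _ hadj_ab)
    linear_combination h3 - Pc e (e + ((1 : ℕ) : Fin n)) * htwo
  -- step 3 : sum over the cycle
  have hsum : ∑ e : Fin n, (Pc e (e + ((1 : ℕ) : Fin n)) + Pc (e + ((1 : ℕ) : Fin n)) e)
      = ∑ _e : Fin n, cF := Finset.sum_congr rfl (fun e _ => hD e)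
  rw [Finset.sum_add_distrib] at hsum
  have hre : ∑ e : Fin n, Pc (e + ((1 : ℕ) : Fin n)) e
      = ∑ e : Fin n, Pc e (e + ((n - 1 : ℕ) : Fin n)) := by
    apply Fintype.sum_equiv (Equiv.addRight ((1 : ℕ) : Fin n))
    intro x
    simp only [Equiv.coe_addRight]
    congr 1
    exact (shift_total x (d := 1) (d' := n - 1) (by omega)).symm
  rw [hre] at hsum
  have hflip : ∑ e : Fin n, Pc e (e + ((n - 1 : ℕ) : Fin n))
      = ∑ e : Fin n, Pc e (e + ((1 : ℕ) : Fin n)) := Finset.sum_congr rfl (fun e _ => hF e)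
  rw [hflip, CharTwo.add_self_eq_zero, Finset.sum_const, Finset.card_univ, Fintype.card_fin,
    nsmul_eq_mul] at hsum
  obtain ⟨m, hm⟩ := hodd
  have hcast : ((n : ℕ) : k) = 1 := by
    rw [hm]
    push_cast
    rw [htwo]
    ring
  rw [hcast, one_mul] at hsum
  exact hsum.symm

end MainLemma

/-! ### Conclusion -/

theorem colon_le_m2 (hn : 5 ≤ n) (hodd : Odd n) [CharP k 2] :
    Submodule.colon (frobPow (beIdeal (k := k) (cycleG n)ᶜ) 2)
        (beIdeal (k := k) (cycleG n)ᶜ)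
      ≤ frobPow (maxIdeal k n) 2 := by
  intro g hg
  haveI : NeZero n := ⟨by omega⟩
  have key : ∀ s : (Fin n ⊕ Fin n) →₀ ℕ, s ≤ Fullv n → coeff s g = 0 := by
    intro s hs
    have hg' : (monomial (Fullv n - s) (1 : k)) * g ∈
        Submodule.colon (frobPow (beIdeal (k := k) (cycleG n)ᶜ) 2)
          (beIdeal (k := k) (cycleG n)ᶜ) := Ideal.mul_mem_left _ _ hg
    have hyp : ∀ a b : Fin n, ((cycleG n)ᶜ).Adj a b →
        (monomial (Fullv n - s) (1 : k) * g) * fb a b ∈ S2 k n := by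
      intro a b hadj
      have hfb : (fb a b : Ring' k n) ∈ beIdeal (k := k) (cycleG n)ᶜ :=
        Ideal.subset_span ⟨a, b, hadj, rfl⟩
      have hmem := Submodule.mem_colon.mp hg' (fb a b) hfb
      rw [smul_eq_mul] at hmem
      exact frob_le_S2 hmem
    have h0 := coeff_full_zero hn hodd _ hyp
    rw [coeff_monomial_mul', if_pos tsub_le_self, tsub_tsub_cancel_of_le hs, one_mul] at h0
    exact h0
  have hXsq : ∀ v : Fin n ⊕ Fin n, (X v : Ring' k n) ^ 2 ∈ frobPow (maxIdeal k n) 2 := by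
    intro v
    refine Ideal.subset_span ⟨X v, ?_, rfl⟩
    exact Ideal.subset_span ⟨v, rfl⟩
  rw [show g = ∑ s ∈ g.support, monomial s (coeff s g) from (support_sum_monomial_coeff g).symm]
  apply Submodule.sum_mem
  intro s _
  by_cases hsf : s ≤ Fullv n
  · rw [key s hsf]
    simp
  · have hex : ∃ v, 2 ≤ s v := by
      by_contra hc
      push_neg at hc
      refine hsf (Finsupp.le_def.mpr fun v => ?_)
      rw [Fullv_apply]
      have := hc v
      omega
    obtain ⟨v, hv⟩ := hex
    have heq : monomial s (coeff s g)
        = monomial (s - Finsupp.single v 2) (coeff s g) * (X v : Ring' k n) ^ 2 := by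
      rw [X_pow_eq_monomial, monomial_mul, mul_one,
        tsub_add_cancel_of_le (Finsupp.single_le_iff.mpr hv)]
    rw [heq]
    exact Ideal.mul_mem_left _ _ (hXsq v)

/-- for odd `n ≥ 5` and `k` of characteristic `2`, with `G` the
complement of the cycle `C_n`, one has `J_G^{[2]} : J_G ⊆ m^{[2]}`; that is, `R/J_G` is
not F-pure (Fedder's criterion). -/
theorem odd_antihole_not_F_pure (n : ℕ) (hn : 5 ≤ n) (hodd : Odd n)
    (k : Type*) [Field k] [CharP k 2] :
    Submodule.colon (frobPow (beIdeal (k := k) (cycleG n)ᶜ) 2)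
        (beIdeal (k := k) (cycleG n)ᶜ)
      ≤ frobPow (maxIdeal k n) 2 := by
  exact colon_le_m2 hn hodd

end BEI
end
end
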